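/- For every k ∈ ℤ \ {0} one has η_k^± ≠ 0 (and hence θ_k^± ≠ 0), and there exist constants C, c > 0 and an integer K ≥ 1 such that for all k ∈ ℤ with |k| ≥ K: |θ_k^+| ≤ C |k|³ and |θ_k^-| ≤ c |k|^{-3}. -/
import Mathlib


open Complex MeasureTheory Real Set

noncomputable section

/-- `c_k = k⁴ + i k³ − i k`. -/
def cc (k : ℤ) : ℂ := (k:ℂ)^4 + Complex.I * (k:ℂ)^3 - Complex.I * (k:ℂ)

/-- `d_k = k⁶ + i k³ + k²`. -/
def dd (k : ℤ) : ℂ := (k:ℂ)^6 + Complex.I * (k:ℂ)^3 + (k:ℂ)^2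

/-- `λ_k^+`, using the principal branch of the complex square root (`cpow (1/2)`). -/
def lamP (k : ℤ) : ℂ := (-cc k + (cc k ^ 2 - 4 * dd k) ^ ((1:ℂ)/2)) / 2

/-- `λ_k^-`. -/
def lamM (k : ℤ) : ℂ := (-cc k - (cc k ^ 2 - 4 * dd k) ^ ((1:ℂ)/2)) / 2

/-- `η_k^+ = −i k⁵ − (1 + λ_k^+) i k + k² − λ_k^+`. -/
def etaP (k : ℤ) : ℂ := -Complex.I * (k:ℂ)^5 - (1 + lamP k) * Complex.I * (k:ℂ) + (k:ℂ)^2 - lamP k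

/-- `η_k^-`. -/
def etaM (k : ℤ) : ℂ := -Complex.I * (k:ℂ)^5 - (1 + lamM k) * Complex.I * (k:ℂ) + (k:ℂ)^2 - lamM k

/-- `θ_k^+ = η_k^+ / λ_k^+`. -/
def thetaP (k : ℤ) : ℂ := etaP k / lamP k

/-- `θ_k^- = η_k^- / λ_k^-`. -/
def thetaM (k : ℤ) : ℂ := etaM k / lamM k

/- ### Auxiliary definitions and lemmas -/

def AA (k : ℤ) : ℂ := (k:ℂ)^2 - Complex.I * ((k:ℂ)^5 + (k:ℂ))
def BB (k : ℤ) : ℂ := 1 + Complex.I * (k:ℂ)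
def NN (k : ℤ) : ℂ := (((k:ℝ)^8 + 2*(k:ℝ)^6 - (k:ℝ)^4 + (k:ℝ)^2 : ℝ) : ℂ)
  + ((-(k:ℝ)^9 + 2*(k:ℝ)^7 + 3*(k:ℝ)^3 : ℝ) : ℂ) * Complex.I

lemma etaP_eq (k : ℤ) : etaP k = AA k - lamP k * BB k := by
  unfold etaP AA BB; ring

lemma etaM_eq (k : ℤ) : etaM k = AA k - lamM k * BB k := by
  unfold etaM AA BB; ring

lemma sq_half (z : ℂ) : (z ^ ((1:ℂ)/2)) * (z ^ ((1:ℂ)/2)) = z := by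
  rcases eq_or_ne z 0 with h | h
  · rw [h, Complex.zero_cpow (by norm_num : (1:ℂ)/2 ≠ 0)]; ring
  · rw [← Complex.cpow_add _ _ h]; norm_num

lemma lam_add (k : ℤ) : lamP k + lamM k = -cc k := by unfold lamP lamM; ring

lemma lam_mul (k : ℤ) : lamP k * lamM k = dd k := by
  unfold lamP lamM
  linear_combination (-(1:ℂ)/4) * sq_half (cc k ^ 2 - 4 * dd k)

lemma quadP (k : ℤ) : lamP k ^ 2 + cc k * lamP k + dd k = 0 := by
  unfold lamP
  linear_combination ((1:ℂ)/4) * sq_half (cc k ^ 2 - 4 * dd k)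

lemma quadM (k : ℤ) : lamM k ^ 2 + cc k * lamM k + dd k = 0 := by
  unfold lamM
  linear_combination ((1:ℂ)/4) * sq_half (cc k ^ 2 - 4 * dd k)

lemma key (k : ℤ) :
    AA k ^ 2 + cc k * AA k * BB k + dd k * BB k ^ 2 = -dd k := by
  unfold AA BB cc dd
  linear_combination ((-(k:ℂ)^9 + (k:ℂ)^7 + (k:ℂ)^3) * Complex.I
    + 3*(k:ℂ)^6 + (k:ℂ)^4 + 2*(k:ℂ)^2) * Complex.I_sq

lemma hNval (k : ℤ) : cc k * AA k + 2 * BB k * dd k = NN k := by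
  unfold AA BB cc dd NN
  push_cast
  linear_combination (-(k:ℂ)^8 + (k:ℂ)^6 + (k:ℂ)^4 + (k:ℂ)^2) * Complex.I_sq

lemma intpow_re (k : ℤ) (n : ℕ) : ((k:ℂ)^n).re = (k:ℝ)^n := by
  rw [show (k:ℂ) = ((k:ℝ):ℂ) from (Complex.ofReal_intCast k).symm, ← Complex.ofReal_pow,
    Complex.ofReal_re]

lemma intpow_im (k : ℤ) (n : ℕ) : ((k:ℂ)^n).im = 0 := by
  rw [show (k:ℂ) = ((k:ℝ):ℂ) from (Complex.ofReal_intCast k).symm, ← Complex.ofReal_pow,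
    Complex.ofReal_im]

lemma dd_re (k : ℤ) : (dd k).re = (k:ℝ)^6 + (k:ℝ)^2 := by
  unfold dd; simp [Complex.add_re, Complex.mul_re, intpow_re, intpow_im]

lemma cc_re (k : ℤ) : (cc k).re = (k:ℝ)^4 := by
  unfold cc; simp [Complex.sub_re, Complex.add_re, Complex.mul_re, intpow_re, intpow_im]

lemma NN_re (k : ℤ) : (NN k).re = (k:ℝ)^8 + 2*(k:ℝ)^6 - (k:ℝ)^4 + (k:ℝ)^2 := by
  unfold NN; simp [intpow_re, intpow_im]

lemma NN_im (k : ℤ) : (NN k).im = -(k:ℝ)^9 + 2*(k:ℝ)^7 + 3*(k:ℝ)^3 := by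
  unfold NN; simp [intpow_re, intpow_im]

lemma dd_ne (k : ℤ) (hk : k ≠ 0) : dd k ≠ 0 := by
  intro h
  have h2 : (dd k).re = 0 := by rw [h]; simp
  rw [dd_re] at h2
  have hk' : (k:ℝ) ≠ 0 := Int.cast_ne_zero.mpr hk
  have h6 : (0:ℝ) < (k:ℝ)^2 := by positivity
  have h7 : (0:ℝ) ≤ (k:ℝ)^6 := by positivity
  linarith

lemma re_half_nonneg (z : ℂ) : 0 ≤ (z ^ ((1:ℂ)/2)).re := by
  rcases eq_or_ne z 0 with h | h
  · rw [h, Complex.zero_cpow (by norm_num : (1:ℂ)/2 ≠ 0)]; simp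
  · rw [Complex.cpow_def_of_ne_zero h, Complex.exp_re]
    apply mul_nonneg (Real.exp_nonneg _)
    have him : (Complex.log z * (1/2)).im = z.arg / 2 := by
      simp [Complex.mul_im, Complex.log_im]
      ring
    rw [him]
    apply Real.cos_nonneg_of_mem_Icc
    constructor
    · have := Complex.neg_pi_lt_arg z; linarith
    · have := Complex.arg_le_pi z; linarith

lemma lamP_ne (k : ℤ) (hk : k ≠ 0) : lamP k ≠ 0 := by
  intro h
  exact dd_ne k hk (by rw [← lam_mul k, h, zero_mul])

lemma lamM_ne (k : ℤ) (hk : k ≠ 0) : lamM k ≠ 0 := by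
  intro h
  exact dd_ne k hk (by rw [← lam_mul k, h, mul_zero])

lemma etaP_ne (k : ℤ) (hk : k ≠ 0) : etaP k ≠ 0 := by
  intro h
  rw [etaP_eq] at h
  have hAB : AA k = lamP k * BB k := by linear_combination h
  exact dd_ne k hk (by
    linear_combination key k - BB k^2 * quadP k - (AA k + lamP k * BB k + cc k * BB k) * hAB)

lemma etaM_ne (k : ℤ) (hk : k ≠ 0) : etaM k ≠ 0 := by
  intro h
  rw [etaM_eq] at h
  have hAB : AA k = lamM k * BB k := by linear_combination h
  exact dd_ne k hk (by
    linear_combination key k - BB k^2 * quadM k - (AA k + lamM k * BB k + cc k * BB k) * hAB)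

lemma theta_prod (k : ℤ) (hk : k ≠ 0) : thetaP k * thetaM k = -1 := by
  have hee : etaP k * etaM k = -dd k := by
    rw [etaP_eq, etaM_eq]
    linear_combination key k - AA k * BB k * lam_add k + BB k^2 * lam_mul k
  unfold thetaP thetaM
  rw [div_mul_div_comm, hee, lam_mul, neg_div, div_self (dd_ne k hk)]

lemma theta_sum (k : ℤ) (hk : k ≠ 0) : thetaP k + thetaM k = -NN k / dd k := by
  have hnum : etaP k * lamM k + lamP k * etaM k = -NN k := by
    rw [etaP_eq, etaM_eq]
    linear_combination AA k * lam_add k - 2 * BB k * lam_mul k - hNval k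
  unfold thetaP thetaM
  rw [div_add_div _ _ (lamP_ne k hk) (lamM_ne k hk), hnum, lam_mul]

set_option maxHeartbeats 2000000 in
theorem eta_theta_nonzero_and_theta_bounds :
    (∀ k : ℤ, k ≠ 0 → etaP k ≠ 0 ∧ etaM k ≠ 0 ∧ thetaP k ≠ 0 ∧ thetaM k ≠ 0) ∧
    (∃ (C c : ℝ) (K : ℕ), 0 < C ∧ 0 < c ∧ 1 ≤ K ∧
      ∀ k : ℤ, (K:ℤ) ≤ |k| →
        ‖thetaP k‖ ≤ C * |(k:ℝ)|^3 ∧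
        ‖thetaM k‖ ≤ c / |(k:ℝ)|^3) := by
  constructor
  · intro k hk
    exact ⟨etaP_ne k hk, etaM_ne k hk,
      div_ne_zero (etaP_ne k hk) (lamP_ne k hk),
      div_ne_zero (etaM_ne k hk) (lamM_ne k hk)⟩
  · refine ⟨11, 12, 10, by norm_num, by norm_num, by norm_num, ?_⟩
    intro k hK
    have hk : k ≠ 0 := by
      intro h; rw [h] at hK; simp at hK
    set m : ℝ := |(k:ℝ)| with hm
    have hm10 : (10:ℝ) ≤ m := by
      have h1 : ((10:ℤ):ℝ) ≤ ((|k|:ℤ):ℝ) := by exact_mod_cast hK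
      rw [Int.cast_abs] at h1
      simpa using h1
    have hm1 : (1:ℝ) ≤ m := by linarith
    have hm0 : (0:ℝ) < m := by linarith
    have hknorm : ‖(k:ℂ)‖ = m := by
      rw [hm]; simp
    -- even power identities
    have e2 : (k:ℝ)^2 = m^2 := by
      rw [hm, pow_abs]; exact (_root_.abs_of_nonneg (by positivity)).symm
    have e4 : (k:ℝ)^4 = m^4 := by
      rw [hm, pow_abs]; exact (_root_.abs_of_nonneg (by positivity)).symm
    have e6 : (k:ℝ)^6 = m^6 := by
      rw [hm, pow_abs]; exact (_root_.abs_of_nonneg (by positivity)).symm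
    have e8 : (k:ℝ)^8 = m^8 := by
      rw [hm, pow_abs]; exact (_root_.abs_of_nonneg (by positivity)).symm
    -- big-m facts
    have a2 : (100:ℝ) ≤ m^2 := by nlinarith
    have a3 : m^7 * 100 ≤ m^9 := by
      have := mul_le_mul_of_nonneg_left a2 (le_of_lt (pow_pos hm0 7))
      nlinarith [this]
    have a4 : m^3 ≤ m^7 := pow_le_pow_right₀ hm1 (by norm_num)
    have hbig : 2*m^7 + 3*m^3 ≤ m^9/2 := by linarith [pow_pos hm0 7]
    have h96 : 96*m ≤ m^3 := by
      have := mul_le_mul_of_nonneg_left a2 (le_of_lt hm0)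
      nlinarith [this]
    -- norm bounds for AA, BB
    have hnA : ‖AA k‖ ≤ 3 * m^5 := by
      have h1 : ‖AA k‖ ≤ ‖(k:ℂ)^2‖ + ‖Complex.I‖ * ‖(k:ℂ)^5 + (k:ℂ)‖ := by
        unfold AA
        refine (norm_sub_le _ _).trans ?_
        rw [norm_mul]
      have h2 : ‖(k:ℂ)^5 + (k:ℂ)‖ ≤ ‖(k:ℂ)^5‖ + ‖(k:ℂ)‖ := norm_add_le _ _
      simp only [norm_pow, hknorm, Complex.norm_I, one_mul] at h1 h2
      have p2 : m^2 ≤ m^5 := pow_le_pow_right₀ hm1 (by norm_num)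
      have p1 : m ≤ m^5 := by
        calc m = m^1 := (pow_one m).symm
        _ ≤ m^5 := pow_le_pow_right₀ hm1 (by norm_num)
      linarith
    have hnB : ‖BB k‖ ≤ 2 * m := by
      have h1 : ‖BB k‖ ≤ ‖(1:ℂ)‖ + ‖Complex.I‖ * ‖(k:ℂ)‖ := by
        unfold BB
        refine (norm_add_le _ _).trans ?_
        rw [norm_mul]
      simp only [norm_one, Complex.norm_I, one_mul, hknorm] at h1
      linarith
    -- bounds on dd
    have hdlow : m^6 ≤ ‖dd k‖ := by
      have h1 : |(dd k).re| ≤ ‖dd k‖ := Complex.abs_re_le_norm (dd k)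
      rw [dd_re] at h1
      have h2 : (0:ℝ) ≤ (k:ℝ)^6 + (k:ℝ)^2 := by positivity
      rw [_root_.abs_of_nonneg h2] at h1
      have h3 : (0:ℝ) ≤ (k:ℝ)^2 := by positivity
      rw [e6] at h1
      linarith
    have hdpos : (0:ℝ) < ‖dd k‖ := lt_of_lt_of_le (by positivity) hdlow
    have hdup : ‖dd k‖ ≤ 3 * m^6 := by
      have h1 : ‖dd k‖ ≤ ‖(k:ℂ)^6‖ + ‖Complex.I‖ * ‖(k:ℂ)^3‖ + ‖(k:ℂ)^2‖ := by
        unfold dd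
        refine (norm_add₃_le).trans ?_
        rw [norm_mul]
      simp only [norm_pow, hknorm, Complex.norm_I, one_mul] at h1
      have p3 : m^3 ≤ m^6 := pow_le_pow_right₀ hm1 (by norm_num)
      have p2 : m^2 ≤ m^6 := pow_le_pow_right₀ hm1 (by norm_num)
      linarith
    -- |NN im| exactly
    have him_eq : |(NN k).im| = m^9 - 2*m^7 - 3*m^3 := by
      rw [NN_im]
      rcases abs_cases (k:ℝ) with ⟨he, _⟩ | ⟨he, _⟩
      · have hkm : (k:ℝ) = m := by rw [hm, he]
        rw [hkm, show -(m^9) + 2*m^7 + 3*m^3 = -(m^9 - 2*m^7 - 3*m^3) from by ring,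
          abs_neg]
        exact _root_.abs_of_nonneg (by nlinarith [pow_pos hm0 9])
      · have hkm : (k:ℝ) = -m := by rw [hm, he]; exact (neg_neg _).symm
        rw [hkm, show -((-m)^9) + 2*(-m)^7 + 3*(-m)^3 = m^9 - 2*m^7 - 3*m^3 from by ring]
        exact _root_.abs_of_nonneg (by nlinarith [pow_pos hm0 9])
    have hNlow : m^9/2 ≤ ‖NN k‖ := by
      have h1 : |(NN k).im| ≤ ‖NN k‖ := Complex.abs_im_le_norm (NN k)
      rw [him_eq] at h1
      linarith only [h1, hbig]
    have hNup : ‖NN k‖ ≤ 10 * m^9 := by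
      have h1 : ‖NN k‖ ≤ |(NN k).re| + |(NN k).im| := Complex.norm_le_abs_re_add_abs_im (NN k)
      rw [him_eq, NN_re, e8, e6, e4, e2] at h1
      have h2 : |m^8 + 2*m^6 - m^4 + m^2| ≤ m^8 + 2*m^6 + m^4 + m^2 := by
        rw [abs_le]; constructor <;> nlinarith [pow_pos hm0 4, pow_pos hm0 2]
      have p8 : m^8 ≤ m^9 := pow_le_pow_right₀ hm1 (by norm_num)
      have p6 : m^6 ≤ m^9 := pow_le_pow_right₀ hm1 (by norm_num)
      have p4 : m^4 ≤ m^9 := pow_le_pow_right₀ hm1 (by norm_num)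
      have p2 : m^2 ≤ m^9 := pow_le_pow_right₀ hm1 (by norm_num)
      nlinarith
    -- bounds on the sum S = thetaP + thetaM
    have hnormS : ‖thetaP k + thetaM k‖ = ‖NN k‖ / ‖dd k‖ := by
      rw [theta_sum k hk, norm_div, norm_neg]
    have hSlow : m^3/6 ≤ ‖thetaP k + thetaM k‖ := by
      rw [hnormS, le_div_iff₀ hdpos]
      nlinarith [mul_le_mul_of_nonneg_left hdup (le_of_lt (show (0:ℝ) < m^3/6 by positivity))]
    have hSup : ‖thetaP k + thetaM k‖ ≤ 10 * m^3 := by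
      rw [hnormS, div_le_iff₀ hdpos]
      nlinarith [mul_le_mul_of_nonneg_left hdlow (show (0:ℝ) ≤ 10*m^3 by positivity)]
    -- crude bound on thetaM
    have hlamlow : m^4/2 ≤ ‖lamM k‖ := by
      have hlam : lamM k = -((cc k + (cc k ^ 2 - 4 * dd k) ^ ((1:ℂ)/2)) / 2) := by
        unfold lamM; ring
      have hre : (cc k + (cc k ^ 2 - 4 * dd k) ^ ((1:ℂ)/2)).re
          = (k:ℝ)^4 + ((cc k ^ 2 - 4 * dd k) ^ ((1:ℂ)/2)).re := by
        rw [Complex.add_re, cc_re]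
      have h1 : |(cc k + (cc k ^ 2 - 4 * dd k) ^ ((1:ℂ)/2)).re|
          ≤ ‖cc k + (cc k ^ 2 - 4 * dd k) ^ ((1:ℂ)/2)‖ :=
        Complex.abs_re_le_norm _
      have hs := re_half_nonneg (cc k ^ 2 - 4 * dd k)
      rw [hre] at h1
      rw [e4] at h1
      have h2 : m^4 ≤ |m^4 + ((cc k ^ 2 - 4 * dd k) ^ ((1:ℂ)/2)).re| := by
        rw [_root_.abs_of_nonneg (by positivity)]
        linarith
      rw [hlam, norm_neg, norm_div]
      have h3 : ‖(2:ℂ)‖ = 2 := by norm_num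
      rw [h3, le_div_iff₀ (by norm_num : (0:ℝ) < 2)]
      linarith
    have hcrude : ‖thetaM k‖ ≤ 8 * m := by
      have hetaMnorm : ‖etaM k‖ ≤ 3*m^5 + ‖lamM k‖ * (2*m) := by
        rw [etaM_eq]
        have h1 : ‖AA k - lamM k * BB k‖ ≤ ‖AA k‖ + ‖lamM k‖ * ‖BB k‖ := by
          refine (norm_sub_le _ _).trans ?_
          rw [norm_mul]
        have h2 : ‖lamM k‖ * ‖BB k‖ ≤ ‖lamM k‖ * (2*m) :=
          mul_le_mul_of_nonneg_left hnB (norm_nonneg _)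
        linarith
      have hLpos : (0:ℝ) < ‖lamM k‖ := lt_of_lt_of_le (by positivity) hlamlow
      unfold thetaM
      rw [norm_div, div_le_iff₀ hLpos]
      have h4 : 6*m*(m^4/2) ≤ 6*m*‖lamM k‖ :=
        mul_le_mul_of_nonneg_left hlamlow (by positivity)
      have h5 : 6*m*(m^4/2) = 3*m^5 := by ring
      linarith
    -- lower bound on thetaP
    have hTlow : m^3/12 ≤ ‖thetaP k‖ := by
      have h1 : ‖thetaP k + thetaM k‖ ≤ ‖thetaP k‖ + ‖thetaM k‖ := norm_add_le _ _
      linarith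
    have hprodnorm : ‖thetaP k‖ * ‖thetaM k‖ = 1 := by
      rw [← norm_mul, theta_prod k hk]
      simp
    constructor
    · -- thetaP bound
      have h2 : ‖thetaP k‖ ≤ ‖thetaP k + thetaM k‖ + ‖thetaM k‖ := by
        have := norm_sub_le (thetaP k + thetaM k) (thetaM k)
        simpa using this
      linarith
    · -- thetaM bound
      rw [le_div_iff₀ (by positivity : (0:ℝ) < m^3)]
      have h7 := mul_le_mul_of_nonneg_right hTlow (norm_nonneg (thetaM k))
      rw [hprodnorm] at h7
      linarith
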